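/- Let (Ω, Σ, μ) be a measure space, A ∈ Σ with 0 < μ(A) < ∞, and let x, y : A → [0,∞) be integrable functions such that x(s)·y(s) = a for some constant a > 0 and all s ∈ A. Then μ(A) · ∫_A x·y dμ ≤ (∫_A x dμ) · (∫_A y dμ). -/

import Mathlib

open MeasureTheory

/-- Reverse Chebyshev inequality: if x·y is a positive constant on a set A of finite
positive measure, then μ(A)·∫_A xy ≤ (∫_A x)(∫_A y). -/
theorem reverse_chebyshev {α : Type*} [MeasurableSpace α] (μ : Measure α)
    (A : Set α) (hA : MeasurableSet A) (hA0 : 0 < μ A) (hAfin : μ A < ⊤)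
    (x y : α → ℝ) (hx0 : ∀ s ∈ A, 0 ≤ x s) (hy0 : ∀ s ∈ A, 0 ≤ y s)
    (hxint : IntegrableOn x A μ) (hyint : IntegrableOn y A μ)
    (a : ℝ) (ha : 0 < a) (hxy : ∀ s ∈ A, x s * y s = a) :
    (μ A).toReal * ∫ s in A, x s * y s ∂μ ≤ (∫ s in A, x s ∂μ) * ∫ s in A, y s ∂μ := by
  set M := (μ A).toReal with hMdef
  have hM : 0 < M := ENNReal.toReal_pos hA0.ne' hAfin.ne
  set p := ∫ s in A, x s ∂μ with hpdef
  set q := ∫ s in A, y s ∂μ with hqdef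
  -- the integral of x*y is a * M
  have h1 : (∫ s in A, x s * y s ∂μ) = a * M := by
    rw [setIntegral_congr_fun hA (fun s hs => hxy s hs), setIntegral_const, smul_eq_mul, mul_comm]
    rfl
  -- positivity of p
  have hpos : ∀ (f g : α → ℝ), (∀ s ∈ A, 0 ≤ f s) → IntegrableOn f A μ →
      (∀ s ∈ A, f s * g s = a) → 0 < ∫ s in A, f s ∂μ := by
    intro f g hf0 hfint hfg
    have hae : 0 ≤ᵐ[μ.restrict A] f := ae_restrict_of_forall_mem hA hf0
    rcases lt_or_eq_of_le (setIntegral_nonneg hA hf0) with h | h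
    · exact h
    exfalso
    have h0 : f =ᵐ[μ.restrict A] 0 :=
      (integral_eq_zero_iff_of_nonneg_ae hae hfint).mp h.symm
    have : (μ.restrict A) {s | f s ≠ 0} = 0 := h0
    have hsub : A ⊆ {s | f s ≠ 0} := by
      intro s hs hfs
      have := hfg s hs
      rw [hfs, zero_mul] at this
      exact ha.ne this
    have : μ A = 0 := by
      have hle : μ.restrict A A ≤ μ.restrict A {s | f s ≠ 0} := measure_mono hsub
      rw [Measure.restrict_apply_self] at hle
      exact le_antisymm (by simpa [h0] using hle.trans_eq h0) (zero_le)
    exact hA0.ne' this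
  have hp : 0 < p := hpos x y hx0 hxint hxy
  have hq : 0 < q := hpos y x hy0 hyint (fun s hs => by rw [mul_comm]; exact hxy s hs)
  -- pointwise AM-GM
  have hpt : ∀ s ∈ A, 2 * Real.sqrt (p * q * a) ≤ q * x s + p * y s := by
    intro s hs
    have hxs := hx0 s hs
    have hys := hy0 s hs
    have hxys := hxy s hs
    have key : p * q * a = (q * x s) * (p * y s) := by rw [← hxys]; ring
    have hnn : 0 ≤ (q * x s + p * y s) / 2 := by positivity
    have h2 : Real.sqrt (p * q * a) ≤ (q * x s + p * y s) / 2 := by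
      rw [key]
      have := Real.sqrt_le_sqrt (show (q * x s) * (p * y s) ≤ ((q * x s + p * y s) / 2) ^ 2 by
        nlinarith [sq_nonneg (q * x s - p * y s)])
      rwa [Real.sqrt_sq hnn] at this
    linarith
  -- integrate
  have hci : IntegrableOn (fun _ : α => 2 * Real.sqrt (p * q * a)) A μ :=
    integrableOn_const hAfin.ne
  have hgi : IntegrableOn (fun s => q * x s + p * y s) A μ :=
    (hxint.const_mul q).add (hyint.const_mul p)
  have hint := setIntegral_mono_on hci hgi hA hpt
  rw [setIntegral_const, smul_eq_mul] at hint
  have hsum : (∫ s in A, (q * x s + p * y s) ∂μ) = 2 * (p * q) := by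
    rw [integral_add (hxint.const_mul q) (hyint.const_mul p), integral_const_mul,
      integral_const_mul]
    ring
  rw [hsum] at hint
  -- hint : M * (2 * √(pqa)) ≤ 2 * (p * q)
  have hr : Real.sqrt (p * q * a) ^ 2 = p * q * a :=
    Real.sq_sqrt (by positivity)
  have hrnn : 0 ≤ Real.sqrt (p * q * a) := Real.sqrt_nonneg _
  rw [h1]
  rw [show μ.real A = M from rfl] at hint
  have h2 : M * Real.sqrt (p * q * a) ≤ p * q := by linarith
  have hsq : (M * Real.sqrt (p * q * a)) * (M * Real.sqrt (p * q * a)) ≤ (p * q) * (p * q) :=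
    mul_self_le_mul_self (by positivity) h2
  have h3 : M * M * (p * q * a) ≤ (p * q) * (p * q) := by
    rw [← hr]; nlinarith [hsq]
  nlinarith [h3, mul_pos hp hq, hM, ha]
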